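/- Let k ≥ 2 be an integer and β : Γ_k → ℝ with degree-raised coefficients β̃ : Γ_{k+1} → ℝ. Suppose β_0 = 1, β_{k e_i} = 1 for every i ∈ {1,…,d−1}, and β_{e_i} ≥ 1 − 1/k, β_{(k−1)e_i} ≥ 1 − 1/k, and β_{(k−1)e_i + e_j} ≥ 1 − 1/k for all i ≠ j in {1,…,d−1}. Then β̃_{e_i} ≥ 1 − 1/(k+1), β̃_{k e_i} ≥ 1 − 1/(k+1), and β̃_{k e_i + e_j} ≥ 1 − 1/(k+1) for all i ≠ j in {1,…,d−1}. -/

import Mathlib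

open Finset

/-- The degree-raised coefficients
`β̃_α = Σ_h (α_h/(k+1)) β_{α−e_h} + (α_{last}/(k+1)) β_α` where
`α_{last} = (k+1) − Σ_h α_h`; summands with `α_h = 0` (resp. `α_{last} = 0`) vanish
since the corresponding coefficient is `0`. -/
noncomputable def raise (n k : ℕ) (β : (Fin n → ℕ) → ℝ) (α : Fin n → ℕ) : ℝ :=
  (∑ h : Fin n, ((α h : ℝ) / (k + 1)) * β fun i => α i - if i = h then 1 else 0) +
    (((k + 1 - ∑ i, α i : ℕ) : ℝ) / (k + 1)) * β α

lemma raise_single_one (n k : ℕ) (β : (Fin n → ℕ) → ℝ) (i : Fin n) :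
    raise n k β (Pi.single i 1)
      = 1/(k+1) * β 0 + k/(k+1) * β (Pi.single i 1) := by
  unfold raise
  rw [Finset.sum_eq_single i]
  · have harg : (fun m => Pi.single i 1 m - if m = i then 1 else 0) = (0 : Fin n → ℕ) := by
      funext m
      by_cases hm : m = i
      · subst hm; simp
      · simp [Pi.single_eq_of_ne hm]
    have hsum : (∑ m, Pi.single i (1:ℕ) m) = 1 := by simp
    rw [harg, hsum]
    simp
  · intro b _ hb
    simp [Pi.single_eq_of_ne hb]
  · intro h; exact absurd (mem_univ i) h

lemma raise_single_k (n k : ℕ) (β : (Fin n → ℕ) → ℝ) (i : Fin n) :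
    raise n k β (Pi.single i k)
      = k/(k+1) * β (Pi.single i (k-1)) + 1/(k+1) * β (Pi.single i k) := by
  unfold raise
  rw [Finset.sum_eq_single i]
  · have harg : (fun m => Pi.single i k m - if m = i then 1 else 0)
        = Pi.single i (k-1) := by
      funext m
      by_cases hm : m = i
      · subst hm; simp
      · simp [Pi.single_eq_of_ne hm]
    have hsum : (∑ m, Pi.single i k m) = k := by simp
    rw [harg, hsum]
    have : k + 1 - k = 1 := by omega
    rw [this]
    simp
  · intro b _ hb
    simp [Pi.single_eq_of_ne hb]
  · intro h; exact absurd (mem_univ i) h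

lemma raise_pair (n k : ℕ) (β : (Fin n → ℕ) → ℝ) (i j : Fin n) (hij : i ≠ j) :
    raise n k β (Pi.single i k + Pi.single j 1)
      = k/(k+1) * β (Pi.single i (k-1) + Pi.single j 1) + 1/(k+1) * β (Pi.single i k) := by
  unfold raise
  have hji : j ≠ i := hij.symm
  have hsum : (∑ m, ((Pi.single i k + Pi.single j 1 : Fin n → ℕ)) m) = k + 1 := by
    simp [Finset.sum_add_distrib]
  rw [hsum]
  have hz : k + 1 - (k + 1) = 0 := by omega
  rw [hz]
  have hrest : (∑ h : Fin n, ((((Pi.single i k + Pi.single j 1 : Fin n → ℕ)) h : ℝ) / (k + 1)) *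
      β fun m => ((Pi.single i k + Pi.single j 1 : Fin n → ℕ)) m - if m = h then 1 else 0)
      = ∑ h ∈ ({i, j} : Finset (Fin n)), ((((Pi.single i k + Pi.single j 1 : Fin n → ℕ)) h : ℝ) / (k + 1)) *
      β fun m => ((Pi.single i k + Pi.single j 1 : Fin n → ℕ)) m - if m = h then 1 else 0 := by
    refine (Finset.sum_subset (subset_univ _) ?_).symm
    intro h _ hh
    simp only [Finset.mem_insert, Finset.mem_singleton, not_or] at hh
    simp [Pi.single_eq_of_ne hh.1, Pi.single_eq_of_ne hh.2]
  rw [hrest, Finset.sum_pair hij]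
  have hargi : (fun m => ((Pi.single i k + Pi.single j 1 : Fin n → ℕ)) m - if m = i then 1 else 0)
      = Pi.single i (k-1) + Pi.single j 1 := by
    funext m
    simp only [Pi.add_apply, Pi.single_apply]
    split_ifs <;> simp_all <;> omega
  have hargj : (fun m => ((Pi.single i k + Pi.single j 1 : Fin n → ℕ)) m - if m = j then 1 else 0)
      = Pi.single i k := by
    funext m
    simp only [Pi.add_apply, Pi.single_apply]
    split_ifs <;> simp_all <;> omega
  rw [hargi, hargj]
  simp [Pi.single_eq_of_ne hij, Pi.single_eq_of_ne hji]

lemma key_ineq (K x : ℝ) (hK : 2 ≤ K) (hx : 1 - 1/K ≤ x) :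
    1 - 1/(K+1) ≤ 1/(K+1) + K/(K+1) * x := by
  have hK0 : (0:ℝ) < K := by linarith
  have hK1 : (0:ℝ) < K + 1 := by linarith
  have h2 : K - 1 ≤ K * x := by
    have hm := mul_le_mul_of_nonneg_left hx hK0.le
    have hc : K * (1 - 1/K) = K - 1 := by field_simp
    linarith [hc ▸ hm]
  have e1 : 1/(K+1) + K/(K+1)*x = (1 + K*x)/(K+1) := by ring
  rw [e1, le_div_iff₀ hK1]
  have e2 : (1 - 1/(K+1))*(K+1) = K := by field_simp; ring
  rw [e2]; linarith

theorem degree_raising_preserves_boundary_constraints (d : ℕ) (hd : 2 ≤ d)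
    (k : ℕ) (hk : 2 ≤ k) (β : (Fin (d - 1) → ℕ) → ℝ)
    (h0 : β 0 = 1)
    (hk1 : ∀ i : Fin (d - 1), β (Pi.single i k) = 1)
    (h1 : ∀ i : Fin (d - 1), 1 - 1 / (k : ℝ) ≤ β (Pi.single i 1))
    (h2 : ∀ i : Fin (d - 1), 1 - 1 / (k : ℝ) ≤ β (Pi.single i (k - 1)))
    (h3 : ∀ i j : Fin (d - 1), i ≠ j →
      1 - 1 / (k : ℝ) ≤ β (Pi.single i (k - 1) + Pi.single j 1)) :
    (∀ i : Fin (d - 1), 1 - 1 / ((k : ℝ) + 1) ≤ raise (d - 1) k β (Pi.single i 1)) ∧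
    (∀ i : Fin (d - 1), 1 - 1 / ((k : ℝ) + 1) ≤ raise (d - 1) k β (Pi.single i k)) ∧
    (∀ i j : Fin (d - 1), i ≠ j →
      1 - 1 / ((k : ℝ) + 1) ≤ raise (d - 1) k β (Pi.single i k + Pi.single j 1)) := by
  have hK : (2:ℝ) ≤ (k:ℝ) := by exact_mod_cast hk
  refine ⟨?_, ?_, ?_⟩
  · intro i
    rw [raise_single_one, h0]
    linarith [key_ineq (k:ℝ) (β (Pi.single i 1)) hK (h1 i)]
  · intro i
    rw [raise_single_k, hk1 i]
    linarith [key_ineq (k:ℝ) (β (Pi.single i (k-1))) hK (h2 i)]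
  · intro i j hij
    rw [raise_pair _ _ _ _ _ hij, hk1 i]
    linarith [key_ineq (k:ℝ) (β (Pi.single i (k-1) + Pi.single j 1)) hK (h3 i j hij)]
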